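/- With (S, I) as above, the exchange axiom holds: if A, B ∈ I with |A| > |B|, then there exists s ∈ A such that B ∪ {s} ∈ I. -/
import Mathlib


open scoped Classical

/-- rank of a finite set of linear functionals: dimension of its span. -/
noncomputable def rk {n : ℕ} {V : Submodule (ZMod 2) (Fin n → ZMod 2)}
    (A : Finset (Module.Dual (ZMod 2) V)) : ℕ :=
  Module.finrank (ZMod 2) (Submodule.span (ZMod 2) (A : Set (Module.Dual (ZMod 2) V)))

/-- the exchange axiom for `I = {A ⊆ S : m - rk A ≤ n - |A|}`:
if `A, B ∈ I` with `|A| > |B|`, there is `s ∈ A` with `B ∪ {s} ∈ I`. -/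
theorem matroid_exchange (n m : ℕ) (V : Submodule (ZMod 2) (Fin n → ZMod 2))
    (hV : Module.finrank (ZMod 2) V = m)
    (S : Finset (Module.Dual (ZMod 2) V))
    (A B : Finset (Module.Dual (ZMod 2) V)) (hAS : A ⊆ S) (hBS : B ⊆ S)
    (hA : (m : ℤ) - (rk A : ℤ) ≤ (n : ℤ) - (A.card : ℤ))
    (hB : (m : ℤ) - (rk B : ℤ) ≤ (n : ℤ) - (B.card : ℤ))
    (hcard : B.card < A.card) :
    ∃ s ∈ A, (m : ℤ) - (rk (insert s B) : ℤ) ≤ (n : ℤ) - ((insert s B).card : ℤ) := by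
  by_cases h : ∃ s ∈ A, s ∉ Submodule.span (ZMod 2) (B : Set (Module.Dual (ZMod 2) V))
  · obtain ⟨s, hsA, hs⟩ := h
    refine ⟨s, hsA, ?_⟩
    have hsB : s ∉ B := fun hmem => hs (Submodule.subset_span hmem)
    have hlt : Submodule.span (ZMod 2) (B : Set (Module.Dual (ZMod 2) V)) <
        Submodule.span (ZMod 2) ((insert s B : Finset _) : Set (Module.Dual (ZMod 2) V)) := by
      rw [Finset.coe_insert]
      refine lt_of_le_of_ne (Submodule.span_mono (Set.subset_insert _ _)) ?_
      intro heq
      exact hs (heq ▸ Submodule.subset_span (Set.mem_insert s _))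
    have hrk : rk B < rk (insert s B) := Submodule.finrank_lt_finrank_of_lt hlt
    have hcard' : (insert s B).card = B.card + 1 := Finset.card_insert_of_notMem hsB
    have : (rk B : ℤ) + 1 ≤ (rk (insert s B) : ℤ) := by exact_mod_cast hrk
    rw [hcard']
    push_cast
    omega
  · push_neg at h
    have hns : ¬ A ⊆ B := fun hsub => absurd (Finset.card_le_card hsub) (not_le.mpr hcard)
    obtain ⟨s, hsA, hsB⟩ := Finset.not_subset.mp hns
    refine ⟨s, hsA, ?_⟩
    have hspan : Submodule.span (ZMod 2) ((insert s B : Finset _) : Set (Module.Dual (ZMod 2) V)) =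
        Submodule.span (ZMod 2) (B : Set (Module.Dual (ZMod 2) V)) := by
      rw [Finset.coe_insert]
      exact Submodule.span_insert_eq_span (h s hsA)
    have hrkeq : rk (insert s B) = rk B := by unfold rk; rw [hspan]
    have hAB : rk A ≤ rk B := by
      apply Submodule.finrank_mono
      rw [Submodule.span_le]
      intro x hx
      exact h x hx
    have hcard' : (insert s B).card = B.card + 1 := Finset.card_insert_of_notMem hsB
    rw [hrkeq, hcard']
    have h1 : (rk A : ℤ) ≤ rk B := by exact_mod_cast hAB
    have h2 : (B.card : ℤ) + 1 ≤ A.card := by exact_mod_cast hcard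
    push_cast
    omega
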